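/- arXiv:2307.08592 — 3 statements merged into one kernel-verified Lean document; each statement's English description precedes it below -/
import Mathlib

section
/- The function f(x) = ln(x)/10 - ln(1/2 + x)/√x satisfies f'(x) ≤ 0 for all x in the open interval (0, 0.1). -/
open Real Set

theorem stmt_2 :
    ∀ x ∈ Set.Ioo (0:ℝ) 0.1,
      deriv (fun x : ℝ => Real.log x / 10 - Real.log (1/2 + x) / Real.sqrt x) x ≤ 0 := by
  rintro x ⟨hx0, hx1⟩
  have hx1' : x < 1/10 := by norm_num at hx1; linarith
  have hhalf : (0:ℝ) < 1/2 + x := by linarith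
  have hs0 : 0 < Real.sqrt x := Real.sqrt_pos.2 hx0
  set s := Real.sqrt x with hs
  have hsx : s^2 = x := Real.sq_sqrt hx0.le
  -- derivative computation
  have h1 : HasDerivAt (fun y : ℝ => Real.log y / 10) (1/x/10) x :=
    by simpa [one_div] using (Real.hasDerivAt_log hx0.ne').div_const 10
  have h2 : HasDerivAt (fun y : ℝ => 1/2 + y) 1 x := by
    simpa using (hasDerivAt_id x).const_add (1/2 : ℝ)
  have h3 : HasDerivAt (fun y : ℝ => Real.log (1/2 + y)) (1/(1/2 + x)) x := by
    simpa using h2.log hhalf.ne'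
  have h4 : HasDerivAt Real.sqrt (1/(2*s)) x := Real.hasDerivAt_sqrt hx0.ne'
  have h5 : HasDerivAt (fun y : ℝ => Real.log (1/2 + y) / Real.sqrt y)
      ((1/(1/2 + x) * s - Real.log (1/2 + x) * (1/(2*s))) / s^2) x :=
    h3.div h4 hs0.ne'
  have hD : deriv (fun x : ℝ => Real.log x / 10 - Real.log (1/2 + x) / Real.sqrt x) x
      = 1/x/10 - (1/(1/2 + x) * s - Real.log (1/2 + x) * (1/(2*s))) / s^2 :=
    (h1.sub h5).deriv
  rw [hD]
  -- bound on log
  have hexp : Real.exp (1/2) ≤ 5/3 := by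
    have he : Real.exp (1/2) * Real.exp (1/2) = Real.exp 1 := by
      rw [← Real.exp_add]; norm_num
    nlinarith [Real.exp_pos (1/2 : ℝ), Real.exp_one_lt_d9]
  have hL : Real.log (1/2 + x) ≤ -1/2 := by
    have h1 : Real.log (1/2 + x) ≤ Real.log (3/5) :=
      Real.log_le_log hhalf (by linarith)
    have h2 : Real.log (3/5 : ℝ) ≤ -1/2 := by
      rw [Real.log_le_iff_le_exp (by norm_num)]
      rw [show (-1/2 : ℝ) = -(1/2) by ring, Real.exp_neg]
      rw [le_inv_comm₀ (by norm_num) (Real.exp_pos _)]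
      linarith
    linarith
  set L := Real.log (1/2 + x) with hLdef
  -- rewrite expression with common denominator
  have hxval : x = s^2 := hsx.symm
  rw [hxval]
  have key : 1/s^2/10 - (1/(1/2 + s^2) * s - L * (1/(2*s))) / s^2
      = (s*(1/2+s^2)/5 - 2*s^2 + L*(1/2+s^2)) / (2*s*s^2*(1/2+s^2)) := by
    have h1 : (1/2 + s^2) ≠ 0 := by nlinarith
    field_simp
    ring
  rw [key]
  apply div_nonpos_of_nonpos_of_nonneg
  · have hs2 : s^2 < 1/10 := by rw [hsx]; exact hx1'
    have hss : s < 2/5 := by nlinarith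
    have hLd : L*(1/2+s^2) ≤ -1/2*(1/2+s^2) := by nlinarith
    nlinarith
  · positivity
end

section
/- The function h(y) = ln(1 - y^10)/y^5 - ln(1 - y), defined for y ∈ (0, 0.1), is strictly increasing and tends to 0 as y → 0⁺; consequently h(y) > 0 on (0, 0.1). -/
open Real Set Filter

-- basic inequalities
lemma log_one_sub_le {x : ℝ} (hx : x < 1) : Real.log (1 - x) ≤ -x := by
  have := Real.log_le_sub_one_of_pos (show (0:ℝ) < 1 - x by linarith)
  linarith

lemma log_one_sub_lt {x : ℝ} (h0 : 0 < x) (hx : x < 1) : Real.log (1 - x) < -x := by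
  have := Real.log_lt_sub_one_of_pos (show (0:ℝ) < 1 - x by linarith) (by intro h; linarith)
  linarith

lemma log_one_sub_ge {x : ℝ} (hx : x < 1) : -x / (1 - x) ≤ Real.log (1 - x) := by
  have h1 : (0:ℝ) < 1 - x := by linarith
  have := Real.log_le_sub_one_of_pos (show (0:ℝ) < (1 - x)⁻¹ by positivity)
  rw [Real.log_inv] at this
  have h2 : (1 - x)⁻¹ - 1 = x / (1 - x) := by field_simp; ring
  rw [h2] at this
  rw [neg_div]
  linarith

lemma deriv_formula {y : ℝ} (hy0 : 0 < y) (hy1 : y < 0.1) :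
    HasDerivAt (fun y : ℝ => Real.log (1 - y^10) / y^5 - Real.log (1 - y))
      ((-(10*y^9)/(1 - y^10) * y^5 - Real.log (1 - y^10) * (5*y^4)) / (y^5)^2 + 1/(1-y)) y := by
  have hy10 : (0:ℝ) < 1 - y^10 := by nlinarith [pow_lt_pow_left₀ hy1 hy0.le (by norm_num : (10:ℕ) ≠ 0)]
  have hy1' : (0:ℝ) < 1 - y := by norm_num at hy1 ⊢; linarith
  have h1 : HasDerivAt (fun y : ℝ => 1 - y^10) (-(10*y^9)) y := by
    simpa using (hasDerivAt_pow 10 y).const_sub 1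
  have h2 : HasDerivAt (fun y : ℝ => Real.log (1 - y^10)) (-(10*y^9)/(1 - y^10)) y :=
    h1.log hy10.ne'
  have h3 : HasDerivAt (fun y : ℝ => y^5) ((5:ℝ)*y^4) y := by
    simpa using hasDerivAt_pow 5 y
  have h4 := h2.div h3 (pow_ne_zero 5 hy0.ne')
  have h5 : HasDerivAt (fun y : ℝ => 1 - y) (-1) y := by
    simpa using (hasDerivAt_id y).const_sub 1
  have h6 : HasDerivAt (fun y : ℝ => Real.log (1 - y)) (-1/(1-y)) y := h5.log hy1'.ne'
  have := h4.sub h6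
  convert this using 1
  · rfl
  · rfl
  · rfl
  · ring

lemma deriv_pos {y : ℝ} (hy0 : 0 < y) (hy1 : y < 0.1) :
    0 < (-(10*y^9)/(1 - y^10) * y^5 - Real.log (1 - y^10) * (5*y^4)) / (y^5)^2 + 1/(1-y) := by
  have hy4 : y^4 < 0.1^4 := pow_lt_pow_left₀ hy1 hy0.le (by norm_num : (4:ℕ) ≠ 0)
  have hyA : y^10 < 0.1^10 := pow_lt_pow_left₀ hy1 hy0.le (by norm_num : (10:ℕ) ≠ 0)
  have hy10 : (0:ℝ) < 1 - y^10 := by norm_num at hyA ⊢; nlinarith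
  have hy1' : (0:ℝ) < 1 - y := by norm_num at hy1 ⊢; linarith
  have hL : Real.log (1 - y^10) ≤ -(y^10) := by
    have := log_one_sub_le (show y^10 < 1 by linarith)
    linarith
  set L := Real.log (1 - y^10) with hLdef
  have e : (-(10*y^9)/(1 - y^10) * y^5 - L * (5*y^4)) / (y^5)^2 + 1/(1-y)
      = (-(10*y^14)*(1-y) - L*5*y^4*(1-y^10)*(1-y) + y^10*(1-y^10)) / (y^10*(1-y^10)*(1-y)) := by
    field_simp
  rw [e]
  apply div_pos
  · have hLneg : -L ≥ y^10 := by linarith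
    have hfac : (0:ℝ) ≤ 5*y^4*(1-y^10)*(1-y) := by positivity
    have key : -L*5*y^4*(1-y^10)*(1-y) ≥ y^10 * (5*y^4*(1-y^10)*(1-y)) := by
      have := mul_le_mul_of_nonneg_right hLneg hfac
      nlinarith [this]
    nlinarith [pow_pos hy0 10, pow_pos hy0 14, mul_pos (pow_pos hy0 10) hy10]
  · positivity

theorem stmt_3 :
    StrictMonoOn (fun y : ℝ => Real.log (1 - y^10) / y^5 - Real.log (1 - y)) (Set.Ioo 0 0.1) ∧
    Filter.Tendsto (fun y : ℝ => Real.log (1 - y^10) / y^5 - Real.log (1 - y))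
      (nhdsWithin 0 (Set.Ioi 0)) (nhds 0) ∧
    ∀ y ∈ Set.Ioo (0:ℝ) 0.1, 0 < Real.log (1 - y^10) / y^5 - Real.log (1 - y) := by
  refine ⟨?_, ?_, ?_⟩
  · -- strict mono
    apply strictMonoOn_of_deriv_pos (convex_Ioo _ _)
    · intro y hy
      exact ((deriv_formula hy.1 hy.2).continuousAt).continuousWithinAt
    · rw [interior_Ioo]
      intro y hy
      rw [(deriv_formula hy.1 hy.2).deriv]
      exact deriv_pos hy.1 hy.2
  · -- tendsto
    have T1 : Tendsto (fun y : ℝ => Real.log (1 - y)) (nhdsWithin 0 (Set.Ioi 0)) (nhds 0) := by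
      apply tendsto_nhdsWithin_of_tendsto_nhds
      have c : ContinuousAt (fun y : ℝ => Real.log (1 - y)) 0 :=
        (Real.continuousAt_log (by norm_num : (1:ℝ) - 0 ≠ 0)).comp
          ((continuous_const.sub continuous_id).continuousAt)
      simpa using c.tendsto
    have T2 : Tendsto (fun y : ℝ => Real.log (1 - y^10) / y^5) (nhdsWithin 0 (Set.Ioi 0)) (nhds 0) := by
      have Tg : Tendsto (fun y : ℝ => -(y^5)/(1 - y^10)) (nhdsWithin 0 (Set.Ioi 0)) (nhds 0) := by
        apply tendsto_nhdsWithin_of_tendsto_nhds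
        have c : ContinuousAt (fun y : ℝ => -(y^5)/(1 - y^10)) 0 :=
          ContinuousAt.div (by fun_prop) (by fun_prop) (by norm_num)
        simpa using c.tendsto
      have Tu : Tendsto (fun y : ℝ => -(y^5)) (nhdsWithin 0 (Set.Ioi 0)) (nhds 0) := by
        apply tendsto_nhdsWithin_of_tendsto_nhds
        have c : ContinuousAt (fun y : ℝ => -(y^5)) 0 := by fun_prop
        simpa using c.tendsto
      refine tendsto_of_tendsto_of_tendsto_of_le_of_le' Tg Tu ?_ ?_
      · filter_upwards [Ioo_mem_nhdsGT_of_mem (show (0:ℝ) ∈ Ico 0 0.1 by constructor <;> norm_num)]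
          with y hy
        obtain ⟨hy0, hy1⟩ := hy
        have hyA : y^10 < 0.1^10 := pow_lt_pow_left₀ hy1 hy0.le (by norm_num : (10:ℕ) ≠ 0)
        have hy10 : (0:ℝ) < 1 - y^10 := by norm_num at hyA ⊢; nlinarith
        have h3 : -(y^10)/(1 - y^10) ≤ Real.log (1 - y^10) := by
          have := log_one_sub_ge (show y^10 < 1 by linarith)
          linarith [this]
        have h4 : (-(y^10)/(1 - y^10))/y^5 ≤ Real.log (1 - y^10)/y^5 := by
          gcongr
        have e : (-(y^10)/(1 - y^10))/y^5 = -(y^5)/(1 - y^10) := by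
          field_simp
        rw [e] at h4
        exact h4
      · filter_upwards [Ioo_mem_nhdsGT_of_mem (show (0:ℝ) ∈ Ico 0 0.1 by constructor <;> norm_num)]
          with y hy
        obtain ⟨hy0, hy1⟩ := hy
        have hyA : y^10 < 0.1^10 := pow_lt_pow_left₀ hy1 hy0.le (by norm_num : (10:ℕ) ≠ 0)
        have hy10 : (0:ℝ) < 1 - y^10 := by norm_num at hyA ⊢; nlinarith
        have h5 : Real.log (1 - y^10) ≤ -(y^10) := by
          have := log_one_sub_le (show y^10 < 1 by linarith)
          linarith
        have h6 : Real.log (1 - y^10)/y^5 ≤ (-(y^10))/y^5 := by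
          gcongr
        have e : (-(y^10))/y^5 = -(y^5) := by
          rw [div_eq_iff (pow_ne_zero 5 hy0.ne')]
          ring
        rw [e] at h6
        exact h6
    have := T2.sub T1
    simpa using this
  · -- positivity
    intro y hy
    obtain ⟨hy0, hy1⟩ := hy
    have hyA : y^10 < 0.1^10 := pow_lt_pow_left₀ hy1 hy0.le (by norm_num : (10:ℕ) ≠ 0)
    have hy4 : y^4 < 0.1^4 := pow_lt_pow_left₀ hy1 hy0.le (by norm_num : (4:ℕ) ≠ 0)
    have hy10 : (0:ℝ) < 1 - y^10 := by norm_num at hyA ⊢; nlinarith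
    have h2 : Real.log (1 - y) < -y := log_one_sub_lt hy0 (by norm_num at hy1 ⊢; linarith)
    have h3 : -(y^10)/(1 - y^10) ≤ Real.log (1 - y^10) := log_one_sub_ge (by linarith)
    have h4 : (-(y^10)/(1 - y^10))/y^5 ≤ Real.log (1 - y^10)/y^5 := by
      gcongr
    have e : (-(y^10)/(1 - y^10))/y^5 = -(y^5/(1 - y^10)) := by
      field_simp
    rw [e] at h4
    have h6 : y^5/(1 - y^10) < y := by
      rw [div_lt_iff₀ hy10]
      nlinarith
    linarith
end

section
/- Let k ≥ 1 and let G = (L, R, E) be a bipartite graph. Set weights w(ℓ) = 4k² + 2k for ℓ ∈ L, w(r) = 4k² + 1 for r ∈ R, budget B = 8k³ + 2k² + k, and let H be the bipartite complement of G. Then G contains a balanced biclique K_{k,k} if and only if there exists an independent set S in H with total weight w(S) exactly B. -/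
lemma uniq_aux (n c1 c2 d1 d2 : ℕ) (h1 : c1 < n) (h2 : c2 < n)
    (h : c1 + d1 * n = c2 + d2 * n) : c1 = c2 ∧ d1 = d2 := by
  have hn : 0 < n := lt_of_le_of_lt (Nat.zero_le _) h1
  have e1 : (c1 + d1 * n) / n = d1 := by
    rw [Nat.add_mul_div_right _ _ hn, Nat.div_eq_of_lt h1]; omega
  have e2 : (c2 + d2 * n) / n = d2 := by
    rw [Nat.add_mul_div_right _ _ hn, Nat.div_eq_of_lt h2]; omega
  have hd : d1 = d2 := by rw [← e1, ← e2, h]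
  subst hd
  exact ⟨Nat.add_right_cancel h, rfl⟩

lemma key_arith (k a b : ℕ) (hk : 1 ≤ k)
    (h : a * (4 * k^2 + 2 * k) + b * (4 * k^2 + 1) = 8 * k^3 + 2 * k^2 + k) :
    a = k ∧ b = k := by
  obtain ⟨m, rfl⟩ : ∃ m, k = m + 1 := ⟨k - 1, by omega⟩
  have ha : a ≤ 2 * m + 1 := by
    by_contra h'
    push_neg at h'
    have hle : (2 * m + 2) * (4 * (m + 1)^2 + 2 * (m + 1)) ≤
        a * (4 * (m + 1)^2 + 2 * (m + 1)) := Nat.mul_le_mul_right _ h'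
    nlinarith
  have h2 : 2 * (m + 1) * a + (a + b) * (4 * (m + 1)^2 + 1) =
      ((m + 1) * (2 * m + 1) + a) + 2 * (m + 1) * (4 * (m + 1)^2 + 1) := by
    zify at h ⊢
    linear_combination h
  have hc1 : 2 * (m + 1) * a < 4 * (m + 1)^2 + 1 := by nlinarith
  have hc2 : (m + 1) * (2 * m + 1) + a < 4 * (m + 1)^2 + 1 := by nlinarith
  obtain ⟨e1, e2⟩ := uniq_aux _ _ _ _ _ hc1 hc2 h2
  have e3 : a * (2 * m + 1) = (m + 1) * (2 * m + 1) := by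
    zify at e1 ⊢
    linear_combination e1
  have : a = m + 1 := Nat.eq_of_mul_eq_mul_right (by omega) e3
  omega

theorem stmt_12 {L R : Type*} [Fintype L] [Fintype R] [DecidableEq L] [DecidableEq R]
    (E : L → R → Prop) (k : ℕ) (hk : 1 ≤ k) :
    (∃ (L' : Finset L) (R' : Finset R),
        L'.card = k ∧ R'.card = k ∧ ∀ ℓ ∈ L', ∀ r ∈ R', E ℓ r) ↔
    (∃ (SL : Finset L) (SR : Finset R),
        (∀ ℓ ∈ SL, ∀ r ∈ SR, ¬ ¬ E ℓ r) ∧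
        SL.card * (4 * k^2 + 2 * k) + SR.card * (4 * k^2 + 1)
          = 8 * k^3 + 2 * k^2 + k) := by
  constructor
  · rintro ⟨L', R', hL, hR, hE⟩
    exact ⟨L', R', fun ℓ hℓ r hr hne => hne (hE ℓ hℓ r hr),
      by rw [hL, hR]; ring⟩
  · rintro ⟨SL, SR, hind, hw⟩
    obtain ⟨ha, hb⟩ := key_arith k SL.card SR.card hk hw
    exact ⟨SL, SR, ha, hb, fun ℓ hℓ r hr => of_not_not (hind ℓ hℓ r hr)⟩
end
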